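/- Let G be an uncountable group such that every countable subset of G is contained in a countable normal subgroup of G (G is ω₁-normal). Then every function f : G → ℝ that is slowly oscillating with respect to the finitary ballean of G is constant at infinity: there exists c ∈ ℝ such that for every ε > 0 the set {x ∈ G : |f(x) − c| ≥ ε} is finite. -/

import Mathlib

/-- The ball `E_F[x] = {x} ∪ Fx` of the finitary ballean of a group. -/
def grpBall {G : Type*} [Group G] (F : Set G) (x : G) : Set G :=
  insert x ((fun g => g * x) '' F)

theorem so_key {G : Type*} [Group G]
    (hG : Cardinal.aleph0 < Cardinal.mk G)
    (hnormal : ∀ S : Set G, S.Countable →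
      ∃ H : Subgroup G, H.Normal ∧ (H : Set G).Countable ∧ S ⊆ (H : Set G))
    (f : G → ℝ)
    (hf : ∀ F : Set G, F.Finite → ∀ ε : ℝ, 0 < ε →
      ∃ B : Set G, B.Finite ∧
        ∀ x ∉ B, ∀ a ∈ grpBall F x, ∀ b ∈ grpBall F x, |f a - f b| < ε)
    (ε : ℝ) (hε : 0 < ε) :
    ∃ B : Set G, B.Finite ∧ ∀ x ∉ B, ∀ y ∉ B, |f x - f y| < ε := by
  classical
  by_contra hcon
  push_neg at hcon
  -- hcon : ∀ B, B.Finite → ∃ x ∉ B, ∃ y ∉ B, ε ≤ |f x - f y|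
  have hP : ∀ s : Finset G, ∃ p : G × G,
      p.1 ∉ s ∧ p.2 ∉ s ∧ ε ≤ |f p.1 - f p.2| := by
    intro s
    obtain ⟨x, hx, y, hy, h⟩ := hcon (↑s) s.finite_toSet
    exact ⟨(x, y), by simpa using hx, by simpa using hy, h⟩
  choose P hP1 hP2 hP3 using hP
  -- build increasing finsets
  let F : ℕ → Finset G := fun n =>
    Nat.rec ∅ (fun _ s => s ∪ {(P s).1, (P s).2}) n
  have hFsucc : ∀ n, F (n+1) = F n ∪ {(P (F n)).1, (P (F n)).2} := fun n => rfl
  have hFmono : ∀ i j : ℕ, i ≤ j → F i ⊆ F j := by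
    intro i j hij
    induction j, hij using Nat.le_induction with
    | base => exact subset_rfl
    | succ j hij ih => exact ih.trans (by rw [hFsucc]; exact Finset.subset_union_left)
  set a : ℕ → G := fun n => (P (F n)).1 with ha
  set b : ℕ → G := fun n => (P (F n)).2 with hb
  have haF : ∀ n, a n ∈ F (n+1) := by
    intro n; rw [hFsucc]; exact Finset.mem_union_right _ (by simp [ha])
  have hbF : ∀ n, b n ∈ F (n+1) := by
    intro n; rw [hFsucc]; exact Finset.mem_union_right _ (by simp [hb])
  have hane : ∀ {i j : ℕ}, i < j → a i ≠ a j := by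
    intro i j h heq
    have hmem : a i ∈ F j := hFmono (i+1) j h (haF i)
    rw [heq] at hmem
    exact hP1 (F j) hmem
  have hbne : ∀ {i j : ℕ}, i < j → b i ≠ b j := by
    intro i j h heq
    have hmem : b i ∈ F j := hFmono (i+1) j h (hbF i)
    rw [heq] at hmem
    exact hP2 (F j) hmem
  have hainj : Function.Injective a := by
    intro i j hij
    rcases lt_trichotomy i j with h | h | h
    · exact absurd hij (hane h)
    · exact h
    · exact absurd hij.symm (hane h)
  have hbinj : Function.Injective b := by
    intro i j hij
    rcases lt_trichotomy i j with h | h | h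
    · exact absurd hij (hbne h)
    · exact h
    · exact absurd hij.symm (hbne h)
  -- countable normal subgroup containing all a n, b n
  obtain ⟨H, hHnorm, hHc, hHsub⟩ := hnormal (Set.range a ∪ Set.range b)
    ((Set.countable_range a).union (Set.countable_range b))
  have haH : ∀ n, a n ∈ H := fun n => hHsub (Or.inl ⟨n, rfl⟩)
  have hbH : ∀ n, b n ∈ H := fun n => hHsub (Or.inr ⟨n, rfl⟩)
  set δ : ℝ := ε / 5 with hδdef
  have hδ : 0 < δ := by positivity
  -- for each h, exceptional set for F = {h}
  have hBh : ∀ h : G, ∃ B : Set G, B.Finite ∧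
      ∀ x ∉ B, ∀ u ∈ grpBall {h} x, ∀ v ∈ grpBall {h} x, |f u - f v| < δ :=
    fun h => hf {h} (Set.finite_singleton h) δ hδ
  choose Bh hBhfin hBhprop using hBh
  set C : Set G := ⋃ h ∈ (H : Set G), Bh h with hC
  have hCc : C.Countable := hHc.biUnion (fun h _ => (hBhfin h).countable)
  have : ∃ g : G, g ∉ (H : Set G) ∪ C := by
    by_contra hg
    push_neg at hg
    have : (Set.univ : Set G).Countable := by
      refine Set.Countable.mono (fun x _ => hg x) (hHc.union hCc)
    have : Cardinal.mk G ≤ Cardinal.aleph0 := by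
      rw [Cardinal.mk_le_aleph0_iff]
      exact (Set.countable_univ_iff).mp this
    exact absurd this (not_le.mpr hG)
  obtain ⟨g, hg⟩ := this
  have hgC : ∀ h ∈ (H : Set G), g ∉ Bh h := by
    intro h hh hmem
    exact hg (Or.inr (Set.mem_biUnion hh hmem))
  -- (1): for all h ∈ H, |f (h*g) - f g| < δ
  have key1 : ∀ h ∈ (H : Set G), |f (h * g) - f g| < δ := by
    intro h hh
    have hball1 : h * g ∈ grpBall {h} g := Or.inr ⟨h, rfl, rfl⟩
    have hball2 : g ∈ grpBall {h} g := Or.inl rfl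
    exact hBhprop h g (hgC h hh) (h * g) hball1 g hball2
  -- exceptional set for F = {g}
  obtain ⟨Bg, hBgfin, hBgprop⟩ := hf {g} (Set.finite_singleton g) δ hδ
  -- pick n with a n ∉ Bg and b n ∉ Bg
  have hbad : ({n | a n ∈ Bg} ∪ {n | b n ∈ Bg}).Finite := by
    refine Set.Finite.union ?_ ?_
    · exact Set.Finite.preimage hainj.injOn hBgfin
    · exact Set.Finite.preimage hbinj.injOn hBgfin
  obtain ⟨n, hn⟩ := (Set.Finite.infinite_compl hbad).nonempty
  rw [Set.mem_compl_iff, Set.mem_union] at hn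
  push_neg at hn
  have hna : a n ∉ Bg := hn.1
  have hnb : b n ∉ Bg := hn.2
  -- (2): |f (g * a n) - f (a n)| < δ and same for b
  have key2a : |f (g * a n) - f (a n)| < δ := by
    refine hBgprop (a n) hna (g * a n) (Or.inr ⟨g, rfl, rfl⟩) (a n) (Or.inl rfl)
  have key2b : |f (g * b n) - f (b n)| < δ := by
    refine hBgprop (b n) hnb (g * b n) (Or.inr ⟨g, rfl, rfl⟩) (b n) (Or.inl rfl)
  -- (3): g * a n = (g * a n * g⁻¹) * g with conjugate in H
  have key3a : |f (g * a n) - f g| < δ := by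
    have hconj : g * a n * g⁻¹ ∈ H := hHnorm.conj_mem (a n) (haH n) g
    have := key1 (g * a n * g⁻¹) hconj
    rwa [inv_mul_cancel_right] at this
  have key3b : |f (g * b n) - f g| < δ := by
    have hconj : g * b n * g⁻¹ ∈ H := hHnorm.conj_mem (b n) (hbH n) g
    have := key1 (g * b n * g⁻¹) hconj
    rwa [inv_mul_cancel_right] at this
  -- contradiction
  have : |f (a n) - f (b n)| < 4 * δ := by
    have h1 : |f (a n) - f g| < 2 * δ := by
      calc |f (a n) - f g| ≤ |f (a n) - f (g * a n)| + |f (g * a n) - f g| := abs_sub_le _ _ _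
        _ < δ + δ := by rw [abs_sub_comm] at key2a; exact add_lt_add key2a key3a
        _ = 2 * δ := by ring
    have h2 : |f (b n) - f g| < 2 * δ := by
      calc |f (b n) - f g| ≤ |f (b n) - f (g * b n)| + |f (g * b n) - f g| := abs_sub_le _ _ _
        _ < δ + δ := by rw [abs_sub_comm] at key2b; exact add_lt_add key2b key3b
        _ = 2 * δ := by ring
    calc |f (a n) - f (b n)| ≤ |f (a n) - f g| + |f g - f (b n)| := abs_sub_le _ _ _
      _ < 2 * δ + 2 * δ := by rw [abs_sub_comm (f g)]; exact add_lt_add h1 h2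
      _ = 4 * δ := by ring
  have hεle : ε ≤ |f (a n) - f (b n)| := hP3 (F n)
  have : ε < 4 * δ := lt_of_le_of_lt hεle this
  rw [hδdef] at this
  linarith

/-- If `G` is an uncountable `ω₁`-normal group (every countable subset lies in a
countable normal subgroup), then every slowly oscillating function on the finitary
ballean of `G` is constant at infinity. -/
theorem so_function_constant_at_infinity {G : Type*} [Group G]
    (hG : Cardinal.aleph0 < Cardinal.mk G)
    (hnormal : ∀ S : Set G, S.Countable →
      ∃ H : Subgroup G, H.Normal ∧ (H : Set G).Countable ∧ S ⊆ (H : Set G))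
    (f : G → ℝ)
    (hf : ∀ F : Set G, F.Finite → ∀ ε : ℝ, 0 < ε →
      ∃ B : Set G, B.Finite ∧
        ∀ x ∉ B, ∀ a ∈ grpBall F x, ∀ b ∈ grpBall F x, |f a - f b| < ε) :
    ∃ c : ℝ, ∀ ε : ℝ, 0 < ε → {x : G | ε ≤ |f x - c|}.Finite := by
  classical
  have key : ∀ n : ℕ, ∃ B : Set G, B.Finite ∧
      ∀ x ∉ B, ∀ y ∉ B, |f x - f y| < 1 / (n + 1) :=
    fun n => so_key hG hnormal f hf (1 / (n + 1)) (by positivity)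
  choose B hBfin hB using key
  have hInf : Infinite G := by
    rw [Cardinal.infinite_iff]; exact hG.le
  have hpts : ∀ n : ℕ, ∃ x : G, x ∉ ⋃ i ∈ Finset.range (n + 1), B i := by
    intro n
    have hfin : (⋃ i ∈ Finset.range (n + 1), B i).Finite :=
      Set.Finite.biUnion (Finset.range (n + 1)).finite_toSet (fun i _ => hBfin i)
    exact hfin.infinite_compl.nonempty
  choose x hx using hpts
  have hxB : ∀ i n : ℕ, i ≤ n → x n ∉ B i := by
    intro i n hin hmem
    exact hx n (Set.mem_biUnion (Finset.mem_range.mpr (Nat.lt_succ_of_le hin)) hmem)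
  have hcauchy : CauchySeq (fun n => f (x n)) := by
    rw [Metric.cauchySeq_iff]
    intro ε hε
    obtain ⟨N, hN⟩ := exists_nat_one_div_lt hε
    refine ⟨N, fun m hm n hn => ?_⟩
    rw [Real.dist_eq]
    calc |f (x m) - f (x n)| < 1 / (N + 1) :=
          hB N (x m) (hxB N m hm) (x n) (hxB N n hn)
      _ < ε := by exact_mod_cast hN
  obtain ⟨c, hc⟩ := cauchySeq_tendsto_of_complete hcauchy
  refine ⟨c, fun ε hε => ?_⟩
  obtain ⟨N, hN⟩ := exists_nat_one_div_lt (half_pos hε)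
  refine Set.Finite.subset (hBfin N) (fun y hy => ?_)
  by_contra hyB
  have hle : |f y - c| ≤ 1 / (N + 1) := by
    have hlim : Filter.Tendsto (fun n => |f y - f (x n)|) Filter.atTop
        (nhds (|f y - c|)) := (Filter.Tendsto.sub tendsto_const_nhds hc).abs
    refine le_of_tendsto hlim ?_
    refine Filter.eventually_atTop.mpr ⟨N, fun n hn => le_of_lt ?_⟩
    exact hB N y hyB (x n) (hxB N n hn)
  have hεle : ε ≤ |f y - c| := hy
  have : (1 : ℝ) / (N + 1) < ε / 2 := by exact_mod_cast hN
  linarith
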